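/- arXiv:0902.1328 — 2 statements merged into one kernel-verified Lean document; each statement's English description precedes it below -/
import Mathlib

section
/- Let μ be a probability measure on ℝ with finite first moment. For x < r_μ define the barycentre ψ_μ(x) = (1/μ̄(x))·∫_{[x,∞)} s μ(ds), where μ̄(x) = μ([x,∞)). Then ψ_μ(x) = AVaR_μ(μ̄(x)) for all x < r_μ. -/
open MeasureTheory Set Filter Topology

/-- Tail function `μ([x,∞))`. -/
noncomputable def tailFn (μ : Measure ℝ) (x : ℝ) : ℝ := (μ (Ici x)).toReal

/-- Tail quantile function: left-continuous inverse of the tail function. -/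
noncomputable def tailQ (μ : Measure ℝ) (l : ℝ) : ℝ := sInf {x : ℝ | tailFn μ x < l}

/-- Call function `C_μ(K) = ∫ (s-K)⁺ μ(ds)`. -/
noncomputable def callFn (μ : Measure ℝ) (K : ℝ) : ℝ := ∫ s, max (s - K) 0 ∂μ

/-- Average Value at Risk at level `l`. -/
noncomputable def avar (μ : Measure ℝ) (l : ℝ) : ℝ := (1 / l) * ∫ u in (0 : ℝ)..l, tailQ μ u

/-- Hardy–Littlewood transform of `μ`: the law of `AVaR_μ(ξ)` for `ξ` uniform on `[0,1]`. -/
noncomputable def hlTransform (μ : Measure ℝ) : Measure ℝ :=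
  Measure.map (avar μ) (volume.restrict (Ioc (0 : ℝ) 1))

section Aux

variable {μ : Measure ℝ} [IsProbabilityMeasure μ]

lemma tailFn_antitone : Antitone (tailFn μ) := fun a b hab => by
  apply ENNReal.toReal_mono (measure_ne_top μ _)
  exact measure_mono (Ici_subset_Ici.2 hab)

lemma tailFn_le_one (x : ℝ) : tailFn μ x ≤ 1 := by
  have := prob_le_one (μ := μ) (s := Ici x)
  simpa [tailFn] using ENNReal.toReal_mono ENNReal.one_ne_top this

lemma exists_tailFn_lt {u : ℝ} (hu : 0 < u) : ∃ y, tailFn μ y < u := by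
  have h1 : Tendsto (fun n : ℕ => μ (Ici (n : ℝ))) atTop (𝓝 (μ (⋂ n : ℕ, Ici (n : ℝ)))) :=
    tendsto_measure_iInter_atTop (fun n => measurableSet_Ici.nullMeasurableSet)
      (fun a b hab => Ici_subset_Ici.2 (by exact_mod_cast hab)) ⟨0, measure_ne_top _ _⟩
  have h2 : (⋂ n : ℕ, Ici (n : ℝ)) = ∅ := by
    ext s; simp only [mem_iInter, mem_Ici, mem_empty_iff_false, iff_false, not_forall, not_le]
    obtain ⟨n, hn⟩ := exists_nat_gt s; exact ⟨n, hn⟩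
  rw [h2, measure_empty] at h1
  have h3 : Tendsto (fun n : ℕ => tailFn μ (n : ℝ)) atTop (𝓝 0) := by
    simpa [tailFn, Function.comp_def] using (ENNReal.tendsto_toReal (by simp)).comp h1
  obtain ⟨n, hn⟩ := (h3.eventually (eventually_lt_nhds hu)).exists
  exact ⟨n, hn⟩

lemma exists_le_tailFn {u : ℝ} (hu : u < 1) : ∃ y, u ≤ tailFn μ y := by
  have h1 : Tendsto (fun n : ℕ => μ (Ici (-(n : ℝ)))) atTop (𝓝 (μ (⋃ n : ℕ, Ici (-(n : ℝ))))) :=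
    tendsto_measure_iUnion_atTop (fun a b hab => Ici_subset_Ici.2
      (neg_le_neg (by exact_mod_cast hab)))
  have h2 : (⋃ n : ℕ, Ici (-(n : ℝ))) = univ := by
    ext s; simp only [mem_iUnion, mem_Ici, mem_univ, iff_true]
    obtain ⟨n, hn⟩ := exists_nat_gt (-s); exact ⟨n, by linarith⟩
  rw [h2, measure_univ] at h1
  have h3 : Tendsto (fun n : ℕ => tailFn μ (-(n : ℝ))) atTop (𝓝 1) := by
    simpa [tailFn, Function.comp_def] using
      (ENNReal.tendsto_toReal ENNReal.one_ne_top).comp h1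
  obtain ⟨n, hn⟩ := (h3.eventually (eventually_gt_nhds hu)).exists
  exact ⟨-(n : ℝ), hn.le⟩

/-- Left-continuity consequence of the tail function. -/
lemma exists_lt_tailFn_lt {x u : ℝ} (h : tailFn μ x < u) : ∃ y < x, tailFn μ y < u := by
  have h1 : Tendsto (fun n : ℕ => μ (Ici (x - 1 / ((n : ℝ) + 1)))) atTop
      (𝓝 (μ (⋂ n : ℕ, Ici (x - 1 / ((n : ℝ) + 1))))) := by
    apply tendsto_measure_iInter_atTop (fun n => measurableSet_Ici.nullMeasurableSet)
      (fun a b hab => Ici_subset_Ici.2 (by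
        have hab' : (a : ℝ) ≤ b := by exact_mod_cast hab
        have : (1:ℝ) / ((b:ℝ) + 1) ≤ 1 / ((a:ℝ) + 1) :=
          one_div_le_one_div_of_le (by positivity) (by linarith)
        linarith)) ⟨0, measure_ne_top _ _⟩
  have h2 : (⋂ n : ℕ, Ici (x - 1 / ((n : ℝ) + 1))) = Ici x := by
    ext s; simp only [mem_iInter, mem_Ici]
    constructor
    · intro hs
      by_contra hc
      push_neg at hc
      obtain ⟨n, hn⟩ := exists_nat_gt (1 / (x - s))
      have hxs : 0 < x - s := by linarith
      have h1n : 1 / ((n:ℝ) + 1) < x - s := by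
        rw [div_lt_iff₀ (by positivity)]
        rw [div_lt_iff₀ hxs] at hn
        nlinarith
      have := hs n; linarith
    · intro hs n
      have : (0:ℝ) < 1 / ((n:ℝ)+1) := by positivity
      linarith
  rw [h2] at h1
  have h3 : Tendsto (fun n : ℕ => tailFn μ (x - 1 / ((n:ℝ) + 1))) atTop (𝓝 (tailFn μ x)) := by
    simpa [tailFn, Function.comp_def] using
      (ENNReal.tendsto_toReal (measure_ne_top μ _)).comp h1
  obtain ⟨n, hn⟩ := (h3.eventually (eventually_lt_nhds h)).exists
  refine ⟨x - 1 / ((n:ℝ)+1), ?_, hn⟩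
  have : (0:ℝ) < 1 / ((n:ℝ)+1) := by positivity
  linarith

lemma le_tailQ {u x : ℝ} (hu : 0 < u) (h : u ≤ tailFn μ x) : x ≤ tailQ μ u := by
  apply le_csInf
  · obtain ⟨y, hy⟩ := exists_tailFn_lt (μ := μ) hu; exact ⟨y, hy⟩
  · intro y hy
    by_contra hc
    push_neg at hc
    have := tailFn_antitone (μ := μ) hc.le
    simp only [mem_setOf_eq] at hy
    linarith

lemma bddBelow_tailQ_set {u : ℝ} (hu : u < 1) : BddBelow {x : ℝ | tailFn μ x < u} := by
  obtain ⟨z, hz⟩ := exists_le_tailFn (μ := μ) hu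
  refine ⟨z, fun w hw => ?_⟩
  by_contra hc
  push_neg at hc
  have := tailFn_antitone (μ := μ) hc.le
  simp only [mem_setOf_eq] at hw
  linarith

lemma tailQ_lt {u x : ℝ} (hu1 : u < 1) (h : tailFn μ x < u) : tailQ μ u < x := by
  obtain ⟨y, hy, hy2⟩ := exists_lt_tailFn_lt (μ := μ) h
  calc tailQ μ u ≤ y := csInf_le (bddBelow_tailQ_set hu1) hy2
  _ < x := hy

lemma tailQ_antitoneOn : AntitoneOn (tailQ μ) (Ioo (0:ℝ) 1) := by
  intro a ha b hb hab
  apply csInf_le_csInf (bddBelow_tailQ_set hb.2)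
  · obtain ⟨y, hy⟩ := exists_tailFn_lt (μ := μ) ha.1; exact ⟨y, hy⟩
  · intro y hy
    simp only [mem_setOf_eq] at hy ⊢
    exact lt_of_lt_of_le hy hab

lemma restrict_Ioc_eq_Ioo :
    (volume.restrict (Ioc (0:ℝ) 1)) = (volume.restrict (Ioo (0:ℝ) 1)) :=
  Measure.restrict_congr_set Ioo_ae_eq_Ioc.symm

lemma tailQ_aemeasurable : AEMeasurable (tailQ μ) (volume.restrict (Ioc (0:ℝ) 1)) := by
  rw [restrict_Ioc_eq_Ioo]
  exact aemeasurable_restrict_of_antitoneOn measurableSet_Ioo tailQ_antitoneOn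

lemma map_tailQ : Measure.map (tailQ μ) (volume.restrict (Ioc (0:ℝ) 1)) = μ := by
  haveI : IsFiniteMeasure (Measure.map (tailQ μ) (volume.restrict (Ioc (0:ℝ) 1))) := by
    constructor
    rw [Measure.map_apply_of_aemeasurable tailQ_aemeasurable MeasurableSet.univ,
      preimage_univ, Measure.restrict_apply MeasurableSet.univ, univ_inter]
    exact measure_Ioc_lt_top
  apply Measure.ext_of_Ici
  intro a
  rw [Measure.map_apply_of_aemeasurable tailQ_aemeasurable measurableSet_Ici,
    Measure.restrict_apply' measurableSet_Ioc]
  set t := tailFn μ a with ht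
  have ht0 : 0 ≤ t := ENNReal.toReal_nonneg
  have ht1 : t ≤ 1 := tailFn_le_one a
  have hsub1 : Ioc 0 t ⊆ tailQ μ ⁻¹' Ici a ∩ Ioc 0 1 := by
    intro u hu
    exact ⟨le_tailQ hu.1 hu.2, hu.1, hu.2.trans ht1⟩
  have hsub2 : tailQ μ ⁻¹' Ici a ∩ Ioc 0 1 ⊆ Ioc 0 t ∪ {1} := by
    rintro u ⟨hu1, hu2, hu3⟩
    rcases eq_or_lt_of_le hu3 with h1 | h1
    · exact Or.inr h1
    · left
      refine ⟨hu2, ?_⟩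
      by_contra hc
      push_neg at hc
      exact absurd (mem_Ici.1 hu1) (not_le.2 (tailQ_lt h1 hc))
  have h1 : volume (tailQ μ ⁻¹' Ici a ∩ Ioc 0 1) = ENNReal.ofReal t := by
    apply le_antisymm
    · calc volume (tailQ μ ⁻¹' Ici a ∩ Ioc 0 1) ≤ volume (Ioc 0 t ∪ {1}) := measure_mono hsub2
      _ ≤ volume (Ioc 0 t) + volume ({1} : Set ℝ) := measure_union_le _ _
      _ = ENNReal.ofReal t := by simp
    · calc ENNReal.ofReal t = volume (Ioc 0 t) := by simp
      _ ≤ _ := measure_mono hsub1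
  rw [h1, ht]
  simp [tailFn, ENNReal.ofReal_toReal (measure_ne_top μ _)]

end Aux

theorem stmt_8 (μ : Measure ℝ) [IsProbabilityMeasure μ] (hμ : Integrable id μ) :
    ∀ x : ℝ, 0 < μ (Ioi x) →
      (1 / tailFn μ x) * ∫ s in Ici x, s ∂μ = avar μ (tailFn μ x) := by
  intro x hx
  have hl : 0 < tailFn μ x :=
    ENNReal.toReal_pos (hx.trans_le (measure_mono Ioi_subset_Ici_self)).ne'
      (measure_ne_top μ _)
  have hl1 : tailFn μ x ≤ 1 := tailFn_le_one x
  rw [avar]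
  congr 1
  rw [intervalIntegral.integral_of_le hl.le]
  have key : ∫ s in Ici x, s ∂μ
      = ∫ u, (Ici x).indicator id (tailQ μ u) ∂(volume.restrict (Ioc (0:ℝ) 1)) := by
    calc ∫ s in Ici x, s ∂μ
        = ∫ s, (Ici x).indicator id s
            ∂(Measure.map (tailQ μ) (volume.restrict (Ioc (0:ℝ) 1))) := by
          rw [map_tailQ, integral_indicator measurableSet_Ici]
          simp only [id_eq]
      _ = ∫ u, (Ici x).indicator id (tailQ μ u) ∂(volume.restrict (Ioc (0:ℝ) 1)) :=
          integral_map tailQ_aemeasurable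
            ((measurable_id.indicator measurableSet_Ici).aestronglyMeasurable)
  rw [key]
  have hcong : ∀ᵐ u ∂(volume.restrict (Ioc (0:ℝ) 1)),
      (Ici x).indicator id (tailQ μ u) = (Ioc (0:ℝ) (tailFn μ x)).indicator (tailQ μ) u := by
    have hne1 : ∀ᵐ u ∂(volume.restrict (Ioc (0:ℝ) 1)), u ≠ 1 := by
      refine ae_restrict_of_ae ?_
      have : volume ({(1:ℝ)}) = 0 := by simp
      filter_upwards [measure_eq_zero_iff_ae_notMem.1 this] with u hu
      simpa using hu
    filter_upwards [hne1, ae_restrict_mem measurableSet_Ioc] with u hu1 hu2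
    have hu01 : u < 1 := lt_of_le_of_ne hu2.2 hu1
    rcases le_or_gt u (tailFn μ x) with h | h
    · have hge : x ≤ tailQ μ u := le_tailQ hu2.1 h
      simp only [indicator, mem_Ici, mem_Ioc, id]
      rw [if_pos hge, if_pos ⟨hu2.1, h⟩]
    · have hlt : tailQ μ u < x := tailQ_lt hu01 h
      simp only [indicator, mem_Ici, mem_Ioc]
      rw [if_neg (not_le.2 hlt), if_neg (fun hc => absurd hc.2 (not_le.2 h))]
  rw [integral_congr_ae hcong, integral_indicator measurableSet_Ioc,
    Measure.restrict_restrict measurableSet_Ioc,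
    inter_eq_left.2 (Ioc_subset_Ioc_right hl1)]
end

section
/- Let ν be a probability measure on ℝ with finite first moment satisfying λ·q̄_ν(λ) → 0 as λ → 0⁺. Define G̃(x) = sup_{λ ∈ (0,1)}(λ·q̄_ν(λ) − λx) for x in the support interval of ν. Then G̃ is convex, non-negative, non-increasing, with one-sided derivatives in [−1,0], and there exists a probability measure ν_Δ with C_{ν_Δ}(x) = G̃(x), given explicitly by ν_Δ([x,∞)) = −G̃'(x−). -/
open MeasureTheory Set Filter Topology

open scoped ENNReal NNReal
set_option linter.unusedSectionVars false
set_option linter.unusedVariables false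


noncomputable def rD (G : ℝ → ℝ) (x : ℝ) : ℝ := sInf (slope G x '' Ioi x)
noncomputable def lD (G : ℝ → ℝ) (x : ℝ) : ℝ := sSup (slope G x '' Iio x)

section Aux
variable {G : ℝ → ℝ} (hc : ConvexOn ℝ univ G)
  (hs : ∀ x y : ℝ, x < y → -1 ≤ slope G x y ∧ slope G x y ≤ 0)
include hc hs

lemma slope_mono' (x : ℝ) : MonotoneOn (slope G x) {x}ᶜ := by
  have := hc.slope_mono (mem_univ x)
  rw [Set.compl_eq_univ_diff]
  exact this

lemma bddBelow_slope (x : ℝ) : BddBelow (slope G x '' Ioi x) := by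
  refine ⟨-1, ?_⟩
  rintro _ ⟨y, hy, rfl⟩
  exact (hs x y hy).1

lemma bddAbove_slope (x : ℝ) : BddAbove (slope G x '' Iio x) := by
  refine ⟨0, ?_⟩
  rintro _ ⟨y, hy, rfl⟩
  rw [slope_comm]
  exact (hs y x hy).2

lemma hasDerivWithinAt_rD (x : ℝ) : HasDerivWithinAt G (rD G x) (Ioi x) x := by
  rw [hasDerivWithinAt_iff_tendsto_slope]
  rw [Set.diff_singleton_eq_self (by simp)]
  exact MonotoneOn.tendsto_nhdsGT
    ((slope_mono' hc hs x).mono (fun y hy => ne_of_gt hy)) (bddBelow_slope hc hs x)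

lemma hasDerivWithinAt_lD (x : ℝ) : HasDerivWithinAt G (lD G x) (Iio x) x := by
  rw [hasDerivWithinAt_iff_tendsto_slope]
  rw [Set.diff_singleton_eq_self (by simp)]
  exact MonotoneOn.tendsto_nhdsLT
    ((slope_mono' hc hs x).mono (fun y hy => ne_of_lt hy)) (bddAbove_slope hc hs x)

lemma rD_le_slope {x y : ℝ} (h : x < y) : rD G x ≤ slope G x y :=
  csInf_le (bddBelow_slope hc hs x) (mem_image_of_mem _ h)

lemma slope_le_lD {x y : ℝ} (h : y < x) : slope G x y ≤ lD G x :=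
  le_csSup (bddAbove_slope hc hs x) (mem_image_of_mem _ h)

lemma lD_le_rD (x : ℝ) : lD G x ≤ rD G x := by
  apply csSup_le (Set.Nonempty.image _ ⟨x - 1, by simp⟩)
  rintro _ ⟨y, hy, rfl⟩
  apply le_csInf (Set.Nonempty.image _ ⟨x + 1, by simp⟩)
  rintro _ ⟨z, hz, rfl⟩
  exact slope_mono' hc hs x (ne_of_lt hy) (ne_of_gt hz) (le_of_lt (lt_trans hy hz))

lemma slope_le_lD' {x y : ℝ} (h : x < y) : slope G x y ≤ lD G y := by
  rw [slope_comm]; exact slope_le_lD hc hs h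

lemma rD_mono : Monotone (rD G) := by
  intro x y hxy
  rcases eq_or_lt_of_le hxy with rfl | h
  · exact le_refl _
  · exact le_trans (le_trans (rD_le_slope hc hs h) (slope_le_lD' hc hs h)) (lD_le_rD hc hs y)

lemma rD_nonpos (x : ℝ) : rD G x ≤ 0 :=
  le_trans (rD_le_slope hc hs (lt_add_one x)) (hs x (x+1) (lt_add_one x)).2

lemma neg_one_le_rD (x : ℝ) : -1 ≤ rD G x := by
  apply le_csInf (Set.Nonempty.image _ ⟨x + 1, by simp⟩)
  rintro _ ⟨z, hz, rfl⟩
  exact (hs x z hz).1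

lemma lD_nonpos (x : ℝ) : lD G x ≤ 0 := le_trans (lD_le_rD hc hs x) (rD_nonpos hc hs x)

lemma neg_one_le_lD (x : ℝ) : -1 ≤ lD G x := by
  have h := slope_le_lD hc hs (sub_one_lt x)
  have h2 : -1 ≤ slope G x (x - 1) := by
    rw [slope_comm]; exact (hs (x-1) x (sub_one_lt x)).1
  linarith

end Aux
section PartC
variable {G : ℝ → ℝ} (hc : ConvexOn ℝ univ G)
  (hs : ∀ x y : ℝ, x < y → -1 ≤ slope G x y ∧ slope G x y ≤ 0)
include hc hs

lemma G_diff {a b : ℝ} (h : a < b) : -(b - a) ≤ G b - G a ∧ G b - G a ≤ 0 := by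
  have h1 := (hs a b h).1
  have h2 := (hs a b h).2
  rw [slope_def_field] at h1 h2
  have hba : 0 < b - a := by linarith
  have e1 := mul_le_mul_of_nonneg_right h1 hba.le
  have e2 := mul_le_mul_of_nonneg_right h2 hba.le
  rw [div_mul_cancel₀ _ (ne_of_gt hba)] at e1 e2
  constructor <;> linarith

lemma G_anti : Antitone G := by
  intro a b hab
  rcases eq_or_lt_of_le hab with rfl | h
  · exact le_refl _
  · have := (G_diff hc hs h).2
    linarith

lemma G_cont : Continuous G := by
  apply LipschitzWith.continuous (K := 1)
  apply LipschitzWith.of_dist_le_mul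
  intro a b
  rw [Real.dist_eq, Real.dist_eq, NNReal.coe_one, one_mul]
  rcases lt_trichotomy a b with h | rfl | h
  · obtain ⟨h1, h2⟩ := G_diff hc hs h
    rw [abs_sub_comm (G a), abs_of_neg (by linarith : a - b < 0), abs_le]
    constructor <;> linarith
  · simp
  · obtain ⟨h1, h2⟩ := G_diff hc hs h
    rw [abs_of_pos (by linarith : 0 < a - b), abs_le]
    constructor <;> linarith

lemma slope_tendsto_left {x y : ℝ} (h : y ≠ x) :
    Tendsto (fun z => slope G y z) (𝓝[<] x) (𝓝 (slope G y x)) := by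
  have hcont : ContinuousAt (fun z => (G z - G y) / (z - y)) x := by
    apply ContinuousAt.div
    · exact ((G_cont hc hs).continuousAt).sub continuousAt_const
    · exact continuousAt_id.sub continuousAt_const
    · exact sub_ne_zero.2 (fun hxy => h (hxy.symm))
  have : Tendsto (fun z => (G z - G y) / (z - y)) (𝓝[<] x) (𝓝 ((G x - G y) / (x - y))) :=
    hcont.tendsto.mono_left nhdsWithin_le_nhds
  simpa [slope_def_field] using this

lemma slope_tendsto_right {x y : ℝ} (h : y ≠ x) :
    Tendsto (fun z => slope G y z) (𝓝[>] x) (𝓝 (slope G y x)) := by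
  have hcont : ContinuousAt (fun z => (G z - G y) / (z - y)) x := by
    apply ContinuousAt.div
    · exact ((G_cont hc hs).continuousAt).sub continuousAt_const
    · exact continuousAt_id.sub continuousAt_const
    · exact sub_ne_zero.2 (fun hxy => h (hxy.symm))
  have : Tendsto (fun z => (G z - G y) / (z - y)) (𝓝[>] x) (𝓝 ((G x - G y) / (x - y))) :=
    hcont.tendsto.mono_left nhdsWithin_le_nhds
  simpa [slope_def_field] using this

lemma rD_rcont (x : ℝ) : ContinuousWithinAt (rD G) (Ici x) x := by
  rw [← continuousWithinAt_Ioi_iff_Ici]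
  have hm := rD_mono hc hs
  apply tendsto_order.2
  constructor
  · intro a ha
    filter_upwards [self_mem_nhdsWithin] with z hz
    exact lt_of_lt_of_le ha (hm (le_of_lt hz))
  · intro a ha
    obtain ⟨y, hy, hslt⟩ : ∃ y ∈ Ioi x, slope G x y < a := by
      obtain ⟨_, ⟨y, hy, rfl⟩, h⟩ :=
        exists_lt_of_csInf_lt (Set.Nonempty.image _ ⟨x + 1, by simp⟩)
          (show sInf (slope G x '' Ioi x) < a from ha)
      exact ⟨y, hy, h⟩
    have hlim : slope G y x < a := by rw [slope_comm]; exact hslt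
    have ht : ∀ᶠ z in 𝓝[>] x, slope G y z < a :=
      (slope_tendsto_right hc hs (ne_of_gt hy)).eventually_lt_const hlim
    filter_upwards [ht, Ioo_mem_nhdsGT hy] with z hz1 hz2
    calc rD G z ≤ slope G z y := rD_le_slope hc hs hz2.2
    _ = slope G y z := slope_comm _ _ _
    _ < a := hz1

lemma sSup_rD_Iio (x : ℝ) : sSup (rD G '' Iio x) = lD G x := by
  apply le_antisymm
  · apply csSup_le (Set.Nonempty.image _ ⟨x - 1, by simp⟩)
    rintro _ ⟨y, hy, rfl⟩
    calc rD G y ≤ slope G y x := rD_le_slope hc hs hy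
    _ = slope G x y := slope_comm _ _ _
    _ ≤ lD G x := slope_le_lD hc hs hy
  · apply csSup_le (Set.Nonempty.image _ ⟨x - 1, by simp⟩)
    rintro _ ⟨y, hy, rfl⟩
    have hbdd : BddAbove (rD G '' Iio x) := by
      refine ⟨0, ?_⟩
      rintro _ ⟨z, _, rfl⟩
      exact rD_nonpos hc hs z
    have key : ∀ᶠ z in 𝓝[<] x, slope G y z ≤ sSup (rD G '' Iio x) := by
      filter_upwards [Ioo_mem_nhdsLT hy] with z hz
      calc slope G y z = slope G z y := slope_comm _ _ _
      _ ≤ lD G z := slope_le_lD hc hs hz.1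
      _ ≤ rD G z := lD_le_rD hc hs z
      _ ≤ sSup (rD G '' Iio x) := le_csSup hbdd (mem_image_of_mem _ hz.2)
    have ht := slope_tendsto_left hc hs (ne_of_lt hy)
    have := le_of_tendsto ht key
    rwa [slope_comm] at this

lemma tendsto_rD_leftLim (x : ℝ) : Tendsto (rD G) (𝓝[<] x) (𝓝 (lD G x)) := by
  have := ((rD_mono hc hs).tendsto_nhdsLT x)
  rwa [sSup_rD_Iio hc hs] at this

end PartC
section PartD
variable {G : ℝ → ℝ} (hc : ConvexOn ℝ univ G)
  (hs : ∀ x y : ℝ, x < y → -1 ≤ slope G x y ∧ slope G x y ≤ 0)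
include hc hs

lemma rD_tendsto_top (htop : Tendsto G atTop (𝓝 0)) : Tendsto (rD G) atTop (𝓝 0) := by
  have hlow : ∀ x : ℝ, G x - G (x - 1) ≤ rD G x := by
    intro x
    have h1 : slope G (x - 1) x = G x - G (x - 1) := by
      rw [slope_def_field]
      have : x - (x - 1) = 1 := by ring
      rw [this, div_one]
    calc G x - G (x - 1) = slope G (x - 1) x := h1.symm
    _ ≤ lD G x := slope_le_lD' hc hs (sub_one_lt x)
    _ ≤ rD G x := lD_le_rD hc hs x
  have h' : Tendsto (fun x : ℝ => x - 1) atTop atTop := by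
    simpa [sub_eq_add_neg] using tendsto_atTop_add_const_right atTop (-1) (tendsto_id (α := ℝ))
  have hlowt : Tendsto (fun x => G x - G (x - 1)) atTop (𝓝 0) := by
    have := htop.sub (htop.comp h')
    simpa using this
  exact tendsto_of_tendsto_of_tendsto_of_le_of_le hlowt tendsto_const_nhds hlow
    (rD_nonpos hc hs)

lemma rD_tendsto_bot (hlin : ∀ l : ℝ, 0 < l → l < 1 → ∃ C, ∀ x, C - l * x ≤ G x) :
    Tendsto (rD G) atBot (𝓝 (-1)) := by
  have hb : BddBelow (range (rD G)) := by
    refine ⟨-1, ?_⟩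
    rintro _ ⟨x, rfl⟩
    exact neg_one_le_rD hc hs x
  have htend := tendsto_atBot_ciInf (rD_mono hc hs) hb
  suffices h : ⨅ x, rD G x = -1 by rwa [h] at htend
  refine le_antisymm ?_ (le_ciInf (neg_one_le_rD hc hs))
  by_contra hlt
  push_neg at hlt
  set c := ⨅ x, rD G x with hcdef
  have hc0 : c ≤ 0 := le_trans (ciInf_le hb 0) (rD_nonpos hc hs 0)
  have hcle : ∀ x, c ≤ rD G x := fun x => ciInf_le hb x
  set l := (1 - c) / 2 with hldef
  have hl0 : 0 < l := by rw [hldef]; linarith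
  have hl1 : l < 1 := by rw [hldef]; linarith
  have hlc : 0 < l + c := by rw [hldef]; linarith
  obtain ⟨C, hC⟩ := hlin l hl0 hl1
  have key : ∀ b : ℝ, b < 0 → G b ≤ G 0 + c * b := by
    intro b hb'
    have h2 : c ≤ slope G b 0 := le_trans (hcle b) (rD_le_slope hc hs hb')
    rw [slope_def_field] at h2
    have hb2 : (0:ℝ) < 0 - b := by linarith
    have := mul_le_mul_of_nonneg_right h2 hb2.le
    rw [div_mul_cancel₀ _ (ne_of_gt hb2)] at this
    nlinarith
  set b := min ((C - G 0) / (l + c) - 1) (-1) with hbdef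
  have hb1 : b < 0 := lt_of_le_of_lt (min_le_right _ _) (by norm_num)
  have hb2 : b ≤ (C - G 0) / (l + c) - 1 := min_le_left _ _
  have h3 : C - G 0 ≤ (l + c) * b := by nlinarith [hC b, key b hb1]
  have h4 : (C - G 0) / (l + c) ≤ b := (div_le_iff₀ hlc).2 (by linarith [mul_comm (l + c) b])
  linarith

lemma integral_rD {a b : ℝ} (hab : a ≤ b) : ∫ t in a..b, rD G t = G b - G a :=
  intervalIntegral.integral_eq_sub_of_hasDeriv_right_of_le hab ((G_cont hc hs).continuousOn)
    (fun x _ => hasDerivWithinAt_rD hc hs x) ((rD_mono hc hs).intervalIntegrable)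

lemma lintegral_rD_Ioi (htop : Tendsto G atTop (𝓝 0)) (x : ℝ) :
    ∫⁻ s in Ioi x, ENNReal.ofReal (-(rD G s)) = ENNReal.ofReal (G x) := by
  set g : ℝ → ℝ≥0∞ := fun s => ENNReal.ofReal (-(rD G s)) with hg
  have hmg : Measurable g := ((rD_mono hc hs).measurable.neg).ennreal_ofReal
  have hint : ∀ n : ℕ, ∫⁻ t in Ioc x (x + n), g t = ENNReal.ofReal (G x - G (x + n)) := by
    intro n
    have hxn : x ≤ x + n := le_add_of_nonneg_right n.cast_nonneg
    have hInt : IntegrableOn (fun t => -(rD G t)) (Ioc x (x + n)) volume := by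
      rw [← intervalIntegrable_iff_integrableOn_Ioc_of_le hxn]
      exact ((rD_mono hc hs).intervalIntegrable).neg
    rw [hg]
    rw [← ofReal_integral_eq_lintegral_ofReal hInt
      (Eventually.of_forall fun t => neg_nonneg.2 (rD_nonpos hc hs t))]
    congr 1
    rw [← intervalIntegral.integral_of_le hxn, intervalIntegral.integral_neg,
      integral_rD hc hs hxn]
    ring
  have hmono_ind : Monotone (fun n : ℕ => (Ioc x (x + (n:ℝ))).indicator g) := by
    intro m n hmn t
    exact Set.indicator_le_indicator_of_subset
      (Ioc_subset_Ioc le_rfl (by exact_mod_cast add_le_add_right (Nat.cast_le.2 hmn) x))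
      (fun _ => zero_le) t
  have hU : ∫⁻ s in Ioi x, g s = ⨆ n : ℕ, ∫⁻ s in Ioc x (x + n), g s := by
    rw [← lintegral_indicator measurableSet_Ioi g]
    have heq : (Ioi x).indicator g = fun t => ⨆ n : ℕ, (Ioc x (x + (n:ℝ))).indicator g t := by
      funext t
      by_cases ht : x < t
      · obtain ⟨n, hn⟩ := exists_nat_ge (t - x)
        apply le_antisymm
        · rw [Set.indicator_of_mem (show t ∈ Ioi x from ht) g]
          refine le_iSup_of_le n ?_
          rw [Set.indicator_of_mem (show t ∈ Ioc x (x + (n:ℝ)) from ⟨ht, by linarith⟩) g]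
        · refine iSup_le fun m => ?_
          exact Set.indicator_le_indicator_of_subset Ioc_subset_Ioi_self (fun _ => zero_le) t
      · have h1 : t ∉ Ioi x := ht
        have h2 : ∀ n : ℕ, t ∉ Ioc x (x + (n:ℝ)) := fun n hn => ht hn.1
        have h3 : ∀ n : ℕ, (Ioc x (x + (n:ℝ))).indicator g t = 0 :=
          fun n => Set.indicator_of_notMem (h2 n) g
        rw [Set.indicator_of_notMem h1 g]
        simp [h3]
    rw [heq, lintegral_iSup (fun n => hmg.indicator measurableSet_Ioc) hmono_ind]
    congr 1
    funext n
    rw [lintegral_indicator measurableSet_Ioc g]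
  rw [hU]
  have hGn : Tendsto (fun n : ℕ => G (x + n)) atTop (𝓝 0) :=
    htop.comp (tendsto_atTop_add_const_left atTop x (tendsto_natCast_atTop_atTop))
  have hmono2 : Monotone (fun n : ℕ => ENNReal.ofReal (G x - G (x + n))) := by
    intro m n hmn
    apply ENNReal.ofReal_le_ofReal
    have : G (x + n) ≤ G (x + m) :=
      G_anti hc hs (by exact_mod_cast add_le_add_right (Nat.cast_le.2 hmn) x)
    linarith
  have hten : Tendsto (fun n : ℕ => ENNReal.ofReal (G x - G (x + n))) atTop
      (𝓝 (ENNReal.ofReal (G x))) := by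
    apply ENNReal.tendsto_ofReal
    have := (tendsto_const_nhds (x := G x) (f := atTop (α := ℕ))).sub hGn
    simpa using this
  calc ⨆ n : ℕ, ∫⁻ s in Ioc x (x + n), g s
      = ⨆ n : ℕ, ENNReal.ofReal (G x - G (x + n)) := by simp_rw [hint]
    _ = ENNReal.ofReal (G x) := tendsto_nhds_unique (tendsto_atTop_iSup hmono2) hten

end PartD
section PartE
variable {G : ℝ → ℝ} (hc : ConvexOn ℝ univ G)
  (hs : ∀ x y : ℝ, x < y → -1 ≤ slope G x y ∧ slope G x y ≤ 0)
include hc hs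

lemma exists_prob_measure (hnn : ∀ x, 0 ≤ G x) (htop : Tendsto G atTop (𝓝 0))
    (hlin : ∀ l : ℝ, 0 < l → l < 1 → ∃ C, ∀ x, C - l * x ≤ G x) :
    ∃ νΔ : Measure ℝ, IsProbabilityMeasure νΔ ∧ (∀ x, callFn νΔ x = G x) ∧
      (∀ x, (νΔ (Ici x)).toReal = - lD G x) := by
  set F : StieltjesFunction ℝ :=
    { toFun := fun x => 1 + rD G x
      mono' := fun a b hab => add_le_add_right (rD_mono hc hs hab) 1
      right_continuous' := fun x => continuousWithinAt_const.add (rD_rcont hc hs x) } with hF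
  have hFapp : ∀ x, F x = 1 + rD G x := fun x => rfl
  have htopF : Tendsto F atTop (𝓝 1) := by
    have h := (tendsto_const_nhds (α := ℝ) (f := atTop) (x := (1:ℝ))).add
      (rD_tendsto_top hc hs htop)
    simpa using h
  have hbotF : Tendsto F atBot (𝓝 0) := by
    have h := (tendsto_const_nhds (α := ℝ) (f := atBot) (x := (1:ℝ))).add
      (rD_tendsto_bot hc hs hlin)
    have h2 : (1:ℝ) + -1 = 0 := by norm_num
    rw [h2] at h
    exact h
  haveI : IsProbabilityMeasure F.measure := F.isProbabilityMeasure hbotF htopF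
  have hIoi : ∀ t, F.measure (Ioi t) = ENNReal.ofReal (-(rD G t)) := by
    intro t
    have h1 : F.measure (Iic t) = ENNReal.ofReal (F t) := by
      rw [F.measure_Iic hbotF t, sub_zero]
    have hcompl := measure_compl (measurableSet_Iic : MeasurableSet (Iic t))
      (measure_ne_top F.measure _)
    rw [compl_Iic] at hcompl
    have hFt0 : 0 ≤ F t := by rw [hFapp]; linarith [neg_one_le_rD hc hs t]
    rw [hcompl, h1, measure_univ,
      show -(rD G t) = 1 - F t by rw [hFapp]; ring,
      ENNReal.ofReal_sub 1 hFt0, ENNReal.ofReal_one]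
  have hIci : ∀ x, F.measure (Ici x) = ENNReal.ofReal (-(lD G x)) := by
    intro x
    rw [F.measure_Ici htopF x]
    have hne : (𝓝[<] x) ≠ ⊥ := NeBot.ne (by infer_instance)
    have hLL : Function.leftLim F x = 1 + lD G x := by
      apply leftLim_eq_of_tendsto
      exact tendsto_const_nhds.add (tendsto_rD_leftLim hc hs x)
    rw [hLL]
    congr 1
    ring
  refine ⟨F.measure, F.isProbabilityMeasure hbotF htopF, ?_, ?_⟩
  · intro x
    have hcont : Continuous (fun a : ℝ => max (a - x) 0) :=
      (continuous_id.sub continuous_const).max continuous_const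
    have hnn' : (0:ℝ → ℝ) ≤ᵐ[F.measure] (fun a => max (a - x) 0) :=
      Eventually.of_forall fun a => le_max_right _ _
    rw [callFn, integral_eq_lintegral_of_nonneg_ae hnn' hcont.aestronglyMeasurable]
    have hlayer : ∫⁻ a, ENNReal.ofReal (max (a - x) 0) ∂F.measure
        = ∫⁻ t in Ioi 0, F.measure {a | t < max (a - x) 0} :=
      lintegral_eq_lintegral_meas_lt F.measure hnn' hcont.aemeasurable
    have hset : ∀ t ∈ Ioi (0:ℝ), F.measure {a | t < max (a - x) 0}
        = ENNReal.ofReal (-(rD G (x + t))) := by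
      intro t ht
      rw [mem_Ioi] at ht
      have hSeq : {a : ℝ | t < max (a - x) 0} = Ioi (x + t) := by
        ext a
        simp only [mem_setOf_eq, lt_max_iff, mem_Ioi]
        constructor
        · rintro (h | h)
          · linarith
          · linarith
        · intro h
          left
          linarith
      rw [hSeq, hIoi]
    have htrans : ∫⁻ t in Ioi (0:ℝ), ENNReal.ofReal (-(rD G (x + t)))
        = ∫⁻ s in Ioi x, ENNReal.ofReal (-(rD G s)) := by
      rw [← lintegral_indicator measurableSet_Ioi, ← lintegral_indicator measurableSet_Ioi]
      have hpt : ∀ t : ℝ, (Ioi (0:ℝ)).indicator (fun t => ENNReal.ofReal (-(rD G (x + t)))) t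
          = ((Ioi x).indicator (fun s => ENNReal.ofReal (-(rD G s)))) (x + t) := by
        intro t
        by_cases h : 0 < t
        · rw [Set.indicator_of_mem (show t ∈ Ioi (0:ℝ) from h),
            Set.indicator_of_mem (show x + t ∈ Ioi x by simp [h])]
        · rw [Set.indicator_of_notMem (show t ∉ Ioi (0:ℝ) from h),
            Set.indicator_of_notMem (show x + t ∉ Ioi x by simpa using h)]
      simp_rw [hpt]
      exact lintegral_add_left_eq_self _ x
    rw [hlayer, setLIntegral_congr_fun measurableSet_Ioi hset, htrans,
      lintegral_rD_Ioi hc hs htop x, ENNReal.toReal_ofReal (hnn x)]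
  · intro x
    rw [hIci, ENNReal.toReal_ofReal (by linarith [lD_nonpos hc hs x])]

end PartE
section PartB
variable {ν : Measure ℝ} [IsProbabilityMeasure ν]

lemma tailFn_anti : Antitone (tailFn ν) := by
  intro a b hab
  apply ENNReal.toReal_mono (measure_ne_top ν _)
  exact measure_mono (Ici_subset_Ici.2 hab)

lemma exists_tailFn_lt_s10 {l : ℝ} (hl : 0 < l) : ∃ x : ℝ, tailFn ν x < l := by
  have hinter : ⋂ n : ℕ, Ici ((n:ℝ)) = ∅ := by
    ext x
    simp only [mem_iInter, mem_Ici, mem_empty_iff_false, iff_false, not_forall, not_le]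
    obtain ⟨n, hn⟩ := exists_nat_gt x
    exact ⟨n, hn⟩
  have htend : Tendsto (fun n : ℕ => ν (Ici ((n:ℝ)))) atTop (𝓝 (ν (⋂ n : ℕ, Ici ((n:ℝ))))) := by
    apply tendsto_measure_iInter_atTop (fun n => (measurableSet_Ici).nullMeasurableSet)
    · intro m n hmn
      exact Ici_subset_Ici.2 (Nat.cast_le.2 hmn)
    · exact ⟨0, measure_ne_top _ _⟩
  rw [hinter, measure_empty] at htend
  have : ∀ᶠ n : ℕ in atTop, ν (Ici ((n:ℝ))) < ENNReal.ofReal l := by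
    apply htend.eventually_lt_const
    simp [hl]
  obtain ⟨n, hn⟩ := this.exists
  exact ⟨n, ENNReal.toReal_lt_of_lt_ofReal hn⟩

lemma exists_lt_tailFn {l : ℝ} (hl0 : 0 < l) (hl : l < 1) : ∃ x : ℝ, l < tailFn ν x := by
  have hunion : ⋃ n : ℕ, Ici (-(n:ℝ)) = univ := by
    ext x
    simp only [mem_iUnion, mem_Ici, mem_univ, iff_true]
    obtain ⟨n, hn⟩ := exists_nat_gt (-x)
    exact ⟨n, by linarith⟩
  have htend : Tendsto (fun n : ℕ => ν (Ici (-(n:ℝ)))) atTop (𝓝 (ν (⋃ n : ℕ, Ici (-(n:ℝ))))) := by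
    apply tendsto_measure_iUnion_atTop
    intro m n hmn
    exact Ici_subset_Ici.2 (by simp [Nat.cast_le.2 hmn])
  rw [hunion, measure_univ] at htend
  have : ∀ᶠ n : ℕ in atTop, ENNReal.ofReal l < ν (Ici (-(n:ℝ))) := by
    apply htend.eventually_const_lt
    exact ENNReal.ofReal_lt_one.2 hl
  obtain ⟨n, hn⟩ := this.exists
  refine ⟨-(n:ℝ), ?_⟩
  rw [tailFn, ← ENNReal.ofReal_lt_iff_lt_toReal hl0.le (measure_ne_top _ _)]
  exact hn

lemma tailQ_anti {a b : ℝ} (ha : a ∈ Ioo (0:ℝ) 1) (hb : b ∈ Ioo (0:ℝ) 1) (hab : a ≤ b) :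
    tailQ ν b ≤ tailQ ν a := by
  apply csInf_le_csInf
  · obtain ⟨x0, hx0⟩ := exists_lt_tailFn (ν := ν) hb.1 hb.2
    refine ⟨x0, ?_⟩
    intro y hy
    by_contra hlt
    push_neg at hlt
    have h2 : tailFn ν x0 ≤ tailFn ν y := tailFn_anti hlt.le
    rw [mem_setOf_eq] at hy
    linarith
  · obtain ⟨x, hx⟩ := exists_tailFn_lt_s10 (ν := ν) ha.1
    exact ⟨x, hx⟩
  · intro y hy
    exact lt_of_lt_of_le hy hab

end PartB
section PartB2
variable {ν : Measure ℝ} [IsProbabilityMeasure ν]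

lemma bound_mul_tailQ
    (h0 : Tendsto (fun l => l * tailQ ν l) (nhdsWithin 0 (Ioi (0 : ℝ))) (nhds 0)) :
    ∃ M : ℝ, 0 ≤ M ∧ ∀ l ∈ Ioo (0:ℝ) 1, l * tailQ ν l ≤ M := by
  have hev : ∀ᶠ l in 𝓝[>] (0:ℝ), |l * tailQ ν l| < 1 := by
    have := NormedAddCommGroup.tendsto_nhds_zero.mp h0 1 one_pos
    simpa only [Real.norm_eq_abs] using this
  rw [eventually_nhdsWithin_iff] at hev
  obtain ⟨ε, hε, hball⟩ := Metric.eventually_nhds_iff.mp hev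
  set l0 : ℝ := min (ε / 2) (1 / 2) with hl0def
  have hl00 : 0 < l0 := by positivity
  have hl01 : l0 < 1 := lt_of_le_of_lt (min_le_right _ _) (by norm_num)
  have hl0ε : l0 < ε := lt_of_le_of_lt (min_le_left _ _) (by linarith)
  set Q : ℝ := max 0 (tailQ ν l0) with hQdef
  refine ⟨max 1 Q, le_trans zero_le_one (le_max_left _ _), ?_⟩
  intro l hl
  by_cases hcase : l < ε
  · have := hball (show dist l 0 < ε by rw [Real.dist_eq, sub_zero, abs_of_pos hl.1]; exact hcase)
      hl.1
    calc l * tailQ ν l ≤ |l * tailQ ν l| := le_abs_self _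
    _ ≤ 1 := this.le
    _ ≤ max 1 Q := le_max_left _ _
  · push_neg at hcase
    have hql : tailQ ν l ≤ tailQ ν l0 :=
      tailQ_anti ⟨hl00, hl01⟩ hl (le_trans hl0ε.le hcase)
    have h1 : l * tailQ ν l ≤ l * Q :=
      mul_le_mul_of_nonneg_left (le_trans hql (le_max_right _ _)) hl.1.le
    have h2 : l * Q ≤ Q := mul_le_of_le_one_left (le_max_left _ _) hl.2.le
    calc l * tailQ ν l ≤ Q := le_trans h1 h2
    _ ≤ max 1 Q := le_max_right _ _

end PartB2

section PartB3
variable {ν : Measure ℝ} [IsProbabilityMeasure ν] {G : ℝ → ℝ}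
variable (h0 : Tendsto (fun l => l * tailQ ν l) (nhdsWithin 0 (Ioi (0 : ℝ))) (nhds 0))
  (hG : ∀ x, G x = ⨆ l : Ioo (0 : ℝ) 1, ((l : ℝ) * tailQ ν (l : ℝ) - (l : ℝ) * x))
include h0 hG

lemma G_bddAbove (x : ℝ) :
    BddAbove (range fun l : Ioo (0:ℝ) 1 => (l : ℝ) * tailQ ν (l : ℝ) - (l : ℝ) * x) := by
  obtain ⟨M, hM0, hM⟩ := bound_mul_tailQ h0
  refine ⟨M + |x|, ?_⟩
  rintro _ ⟨l, rfl⟩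
  have h1 : (l : ℝ) * tailQ ν l ≤ M := hM l l.2
  have h2 : -((l:ℝ) * x) ≤ |x| := by
    calc -((l:ℝ) * x) ≤ |(l:ℝ) * x| := neg_le_abs _
    _ = |(l:ℝ)| * |x| := abs_mul _ _
    _ ≤ 1 * |x| := by
        apply mul_le_mul_of_nonneg_right _ (abs_nonneg x)
        rw [abs_of_pos l.2.1]
        exact l.2.2.le
    _ = |x| := one_mul _
  simp only []
  linarith

lemma term_le_G (x : ℝ) (l : Ioo (0:ℝ) 1) : (l : ℝ) * tailQ ν l - (l : ℝ) * x ≤ G x := by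
  rw [hG]
  exact le_ciSup (G_bddAbove h0 hG x) l

lemma G_le (x b : ℝ) (h : ∀ l : Ioo (0:ℝ) 1, (l : ℝ) * tailQ ν l - (l : ℝ) * x ≤ b) :
    G x ≤ b := by
  rw [hG]
  have : Nonempty (Ioo (0:ℝ) 1) := ⟨⟨1/2, by norm_num⟩⟩
  exact ciSup_le h

lemma G_convex : ConvexOn ℝ univ G := by
  refine ⟨convex_univ, ?_⟩
  intro x _ y _ a b ha hb hab
  apply G_le h0 hG
  intro l
  have h1 := term_le_G h0 hG x l
  have h2 := term_le_G h0 hG y l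
  have ha' : a = 1 - b := by linarith
  rw [ha']
  have h1' := mul_le_mul_of_nonneg_left h1 (by linarith : (0:ℝ) ≤ 1 - b)
  have h2' := mul_le_mul_of_nonneg_left h2 hb
  have key : (l : ℝ) * tailQ ν l - (l : ℝ) * ((1-b) • x + b • y)
      = (1-b) * ((l : ℝ) * tailQ ν l - (l : ℝ) * x) + b * ((l : ℝ) * tailQ ν l - (l : ℝ) * y) := by
    simp only [smul_eq_mul]
    ring
  rw [key]
  simp only [smul_eq_mul]
  linarith

lemma G_slope_bound : ∀ x y : ℝ, x < y → -1 ≤ slope G x y ∧ slope G x y ≤ 0 := by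
  intro x y hxy
  have hmono : G y ≤ G x := by
    apply G_le h0 hG
    intro l
    have h1 := term_le_G h0 hG x l
    have h2 : (l:ℝ) * x ≤ (l:ℝ) * y := mul_le_mul_of_nonneg_left hxy.le l.2.1.le
    linarith
  have hlip : G x ≤ G y + (y - x) := by
    apply G_le h0 hG
    intro l
    have h1 := term_le_G h0 hG y l
    have h2 : (l:ℝ) * (y - x) ≤ y - x := by
      apply mul_le_of_le_one_left (by linarith) l.2.2.le
    nlinarith [l.2.1.le]
  rw [slope_def_field]
  have hpos : 0 < y - x := by linarith
  constructor
  · rw [le_div_iff₀ hpos]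
    linarith
  · apply div_nonpos_of_nonpos_of_nonneg (by linarith) hpos.le

lemma G_nonneg (x : ℝ) : 0 ≤ G x := by
  have hten : Tendsto (fun l => l * tailQ ν l - l * x) (𝓝[>] (0:ℝ)) (𝓝 0) := by
    have h2 : Tendsto (fun l : ℝ => l * x) (𝓝[>] (0:ℝ)) (𝓝 0) := by
      have h3 : Tendsto (fun l : ℝ => l * x) (𝓝 (0:ℝ)) (𝓝 (0 * x)) :=
        (continuous_id.mul continuous_const).tendsto 0
      rw [zero_mul] at h3
      exact h3.mono_left nhdsWithin_le_nhds
    have := h0.sub h2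
    simpa using this
  apply le_of_tendsto hten
  filter_upwards [Ioo_mem_nhdsGT_of_mem (show (0:ℝ) ∈ Ico (0:ℝ) 1 from ⟨le_refl _, one_pos⟩)]
    with l hl
  exact term_le_G h0 hG x ⟨l, hl⟩

lemma G_tendsto_top : Tendsto G atTop (𝓝 0) := by
  rw [Metric.tendsto_atTop]
  intro ε hε
  obtain ⟨M, hM0, hM⟩ := bound_mul_tailQ h0
  have hev : ∀ᶠ l in 𝓝[>] (0:ℝ), |l * tailQ ν l| < ε / 2 := by
    have := NormedAddCommGroup.tendsto_nhds_zero.mp h0 (ε/2) (by linarith)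
    simpa only [Real.norm_eq_abs] using this
  rw [eventually_nhdsWithin_iff] at hev
  obtain ⟨δ, hδ, hball⟩ := Metric.eventually_nhds_iff.mp hev
  refine ⟨max 1 ((M - ε/2)/δ), ?_⟩
  intro x hx
  have hx0 : 0 < x := lt_of_lt_of_le one_pos (le_trans (le_max_left _ _) hx)
  have hGx : G x ≤ ε / 2 := by
    apply G_le h0 hG
    intro l
    by_cases hcase : (l:ℝ) < δ
    · have := hball (show dist (l:ℝ) 0 < δ by
        rw [Real.dist_eq, sub_zero, abs_of_pos l.2.1]; exact hcase) l.2.1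
      have h2 : 0 ≤ (l:ℝ) * x := mul_nonneg l.2.1.le hx0.le
      calc (l:ℝ) * tailQ ν l - (l:ℝ) * x ≤ |(l:ℝ) * tailQ ν l| - (l:ℝ) * x := by
            linarith [le_abs_self ((l:ℝ) * tailQ ν l)]
      _ ≤ ε / 2 := by linarith [this.le]
    · push_neg at hcase
      have h1 : (l:ℝ) * tailQ ν l ≤ M := hM l l.2
      have h2 : δ * x ≤ (l:ℝ) * x := mul_le_mul_of_nonneg_right hcase hx0.le
      have h3 : (M - ε/2)/δ ≤ x := le_trans (le_max_right _ _) hx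
      have h4 : M - ε/2 ≤ δ * x := by
        rw [div_le_iff₀ hδ] at h3
        linarith [mul_comm x δ]
      linarith
  rw [Real.dist_eq, sub_zero, abs_of_nonneg (G_nonneg h0 hG x)]
  linarith

lemma G_lin : ∀ l : ℝ, 0 < l → l < 1 → ∃ C, ∀ x, C - l * x ≤ G x := by
  intro l hl0 hl1
  exact ⟨l * tailQ ν l, fun x => term_le_G h0 hG x ⟨l, hl0, hl1⟩⟩

end PartB3

theorem stmt_10 (ν : Measure ℝ) [IsProbabilityMeasure ν] (hν : Integrable id ν)
    (h0 : Tendsto (fun l => l * tailQ ν l) (nhdsWithin 0 (Ioi (0 : ℝ))) (nhds 0))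
    (G : ℝ → ℝ) (hG : ∀ x, G x = ⨆ l : Ioo (0 : ℝ) 1, ((l : ℝ) * tailQ ν (l : ℝ) - (l : ℝ) * x))
    (lν rν : ℝ) (hl : lν = sSup {x : ℝ | ν (Iio x) = 0}) (hr : rν = sInf {x : ℝ | ν (Ioi x) = 0}) :
    ConvexOn ℝ (Icc lν rν) G ∧
    (∀ x ∈ Icc lν rν, 0 ≤ G x) ∧
    AntitoneOn G (Icc lν rν) ∧
    (∀ x ∈ Icc lν rν, -1 ≤ derivWithin G (Iio x) x ∧ derivWithin G (Iio x) x ≤ 0 ∧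
      -1 ≤ derivWithin G (Ioi x) x ∧ derivWithin G (Ioi x) x ≤ 0) ∧
    ∃ νΔ : Measure ℝ, IsProbabilityMeasure νΔ ∧
      (∀ x ∈ Icc lν rν, callFn νΔ x = G x) ∧
      (∀ x ∈ Icc lν rν, (νΔ (Ici x)).toReal = - derivWithin G (Iio x) x) := by
  have hc : ConvexOn ℝ univ G := G_convex h0 hG
  have hs : ∀ x y : ℝ, x < y → -1 ≤ slope G x y ∧ slope G x y ≤ 0 := G_slope_bound h0 hG
  have hnn : ∀ x, 0 ≤ G x := G_nonneg h0 hG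
  have htop : Tendsto G atTop (𝓝 0) := G_tendsto_top h0 hG
  have hlin := G_lin h0 hG
  have hdl : ∀ x : ℝ, derivWithin G (Iio x) x = lD G x := fun x =>
    (hasDerivWithinAt_lD hc hs x).derivWithin (uniqueDiffWithinAt_Iio x)
  have hdr : ∀ x : ℝ, derivWithin G (Ioi x) x = rD G x := fun x =>
    (hasDerivWithinAt_rD hc hs x).derivWithin (uniqueDiffWithinAt_Ioi x)
  refine ⟨hc.subset (subset_univ _) (convex_Icc _ _), fun x _ => hnn x,
    fun x _ y _ hxy => G_anti hc hs hxy, ?_, ?_⟩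
  · intro x _
    rw [hdl x, hdr x]
    exact ⟨neg_one_le_lD hc hs x, lD_nonpos hc hs x, neg_one_le_rD hc hs x, rD_nonpos hc hs x⟩
  · obtain ⟨νΔ, h1, h2, h3⟩ := exists_prob_measure hc hs hnn htop hlin
    refine ⟨νΔ, h1, fun x _ => h2 x, fun x _ => ?_⟩
    rw [hdl x, h3 x]
end
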